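/- There exists an absolute constant C > 0 such that for every q ∈ ℤ⁺, every α ∈ ℝ and every real X ≥ 1: | ∑_{1 ≤ k ≤ X} φ(kq) e(kα) | ≤ C · σ₁(q) · X² · ∑_{1 ≤ j ≤ X} min(1/j², 1/(Xj⟨jα⟩)), where both sums run over integers in the indicated ranges and a term on the right with ⟨jα⟩ = 0 is read as 1/j² (convention 1/0 = ∞). -/

import Mathlib

open Real

noncomputable section

/-- `e(x) = e^{2πix}`. -/
def e2πi (x : ℝ) : ℂ := Complex.exp (2 * (Real.pi : ℂ) * Complex.I * (x : ℂ))

/-- `⟨x⟩`, the distance from `x` to the nearest integer. -/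
def nint (x : ℝ) : ℝ := |x - (round x : ℝ)|

open Finset ArithmeticFunction
open scoped ArithmeticFunction.Moebius

lemma moebius_prod_primes {T : Finset ℕ} (hT : ∀ p ∈ T, p.Prime) :
    (μ (∏ p ∈ T, p) : ℚ) = (-1 : ℚ) ^ T.card := by
  rw [isMultiplicative_moebius.map_prod_of_prime T hT]
  push_cast
  rw [Finset.prod_congr rfl fun p hp => by rw [moebius_apply_prime (hT p hp)]]
  simp

lemma key_identity (q k : ℕ) (hq : 0 < q) (hk : 0 < k) :
    (Nat.totient (k * q) : ℚ) = (Nat.totient q : ℚ) *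
      ∑ b ∈ k.divisors, (if Nat.Coprime b q then (μ b : ℚ) * ((k / b : ℕ) : ℚ) else 0) := by
  classical
  set S := k.primeFactors with hS
  set Q := q.primeFactors with hQ
  -- step 1: restrict to squarefree divisors
  have h1 : ∑ b ∈ k.divisors, (if Nat.Coprime b q then (μ b : ℚ) * ((k / b : ℕ) : ℚ) else 0)
      = ∑ b ∈ k.divisors with Squarefree b,
          (if Nat.Coprime b q then (μ b : ℚ) * ((k / b : ℕ) : ℚ) else 0) := by
    rw [eq_comm]
    apply Finset.sum_subset (Finset.filter_subset _ _)
    intro b hb hnb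
    rw [Finset.mem_filter, not_and] at hnb
    rw [moebius_eq_zero_of_not_squarefree (hnb hb)]
    simp
  rw [h1, Nat.sum_divisors_filter_squarefree hk.ne']
  have hfin : (UniqueFactorizationMonoid.normalizedFactors k).toFinset = S := by
    rw [Nat.factors_eq]
    simp [hS]
  rw [hfin]
  -- step 2: evaluate each term
  have hterm : ∀ T ∈ S.powerset,
      (if Nat.Coprime (T.val.prod) q then (μ (T.val.prod) : ℚ) * ((k / T.val.prod : ℕ) : ℚ) else 0)
      = (if T ⊆ S \ Q then (k : ℚ) * ∏ p ∈ T, (-(p : ℚ)⁻¹) else 0) := by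
    intro T hT
    rw [Finset.mem_powerset] at hT
    have hTP : ∀ p ∈ T, p.Prime := fun p hp => Nat.prime_of_mem_primeFactors (hT hp)
    have hprod : T.val.prod = ∏ p ∈ T, p := by
      rw [Finset.prod]; exact congrArg Multiset.prod (Multiset.map_id T.val).symm
    have hdvd : (∏ p ∈ T, p) ∣ k :=
      (Finset.prod_dvd_prod_of_subset _ _ _ hT).trans (Nat.prod_primeFactors_dvd k)
    have hprodpos : 0 < ∏ p ∈ T, p :=
      Finset.prod_pos fun p hp => (hTP p hp).pos
    have hcop : Nat.Coprime (∏ p ∈ T, p) q ↔ T ⊆ S \ Q := by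
      rw [Nat.coprime_prod_left_iff]
      constructor
      · intro h p hp
        rw [Finset.mem_sdiff]
        refine ⟨hT hp, fun hpq => ?_⟩
        have := h p hp
        rw [(hTP p hp).coprime_iff_not_dvd] at this
        exact this (Nat.dvd_of_mem_primeFactors hpq)
      · intro h p hp
        rw [(hTP p hp).coprime_iff_not_dvd]
        intro hpq
        have := h hp
        rw [Finset.mem_sdiff] at this
        exact this.2 (Nat.mem_primeFactors.2 ⟨hTP p hp, hpq, hq.ne'⟩)
    rw [hprod]
    by_cases hc : Nat.Coprime (∏ p ∈ T, p) q
    · rw [if_pos hc, if_pos (hcop.1 hc)]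
      rw [moebius_prod_primes hTP, Nat.cast_div hdvd (by positivity), Nat.cast_prod]
      have hne : ∀ p ∈ T, ((p : ℚ)) ≠ 0 := fun p hp => Nat.cast_ne_zero.2 (hTP p hp).pos.ne'
      have : ∏ p ∈ T, (-(p : ℚ)⁻¹) = (-1) ^ T.card * (∏ p ∈ T, (p : ℚ))⁻¹ := by
        rw [← Finset.prod_inv_distrib, ← Finset.prod_const (-1 : ℚ), ← Finset.prod_mul_distrib]
        exact Finset.prod_congr rfl fun p hp => by ring
      rw [this]
      ring
    · rw [if_neg hc, if_neg (fun h => hc (hcop.2 h))]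
  rw [Finset.sum_congr rfl hterm]
  -- step 3: sum over subsets of S reduces to subsets of S \ Q
  have h3 : ∑ T ∈ S.powerset, (if T ⊆ S \ Q then (k : ℚ) * ∏ p ∈ T, (-(p : ℚ)⁻¹) else 0)
      = ∑ T ∈ (S \ Q).powerset, (k : ℚ) * ∏ p ∈ T, (-(p : ℚ)⁻¹) := by
    rw [eq_comm]
    rw [← Finset.sum_filter]
    apply Finset.sum_congr _ (fun _ _ => rfl)
    ext T
    simp only [Finset.mem_filter, Finset.mem_powerset]
    exact ⟨fun h => ⟨h.trans Finset.sdiff_subset, h⟩, fun h => h.2⟩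
  rw [h3, ← Finset.mul_sum]
  -- step 4: product formula
  have h4 : ∑ T ∈ (S \ Q).powerset, ∏ p ∈ T, (-(p : ℚ)⁻¹) = ∏ p ∈ S \ Q, (1 - (p : ℚ)⁻¹) := by
    have := Finset.prod_add (fun p : ℕ => (-(p : ℚ)⁻¹)) (fun _ => (1 : ℚ)) (S \ Q)
    simp only [Finset.prod_const_one, mul_one] at this
    rw [← this]
    apply Finset.prod_congr rfl
    intro p hp; ring
  rw [h4]
  -- step 5: totient product formula
  have hk0 : (k : ℚ) ≠ 0 := Nat.cast_ne_zero.2 hk.ne'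
  rw [Nat.totient_eq_mul_prod_factors, Nat.totient_eq_mul_prod_factors,
    Nat.primeFactors_mul hk.ne' hq.ne']
  have hun : S ∪ Q = (S \ Q) ∪ Q := by rw [Finset.sdiff_union_self_eq_union]
  rw [hun, Finset.prod_union Finset.sdiff_disjoint]
  push_cast
  ring

lemma nint_nonneg (x : ℝ) : 0 ≤ nint x := abs_nonneg _

lemma e2πi_norm_sub_one (β : ℝ) : 4 * nint β ≤ ‖e2πi β - 1‖ := by
  have hform : e2πi β = Complex.exp (((2 * π * β : ℝ) : ℂ) * Complex.I) := by
    unfold e2πi; push_cast; ring_nf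
  have habs : ‖e2πi β - 1‖ = 2 * |Real.sin (π * β)| := by
    rw [hform, Complex.exp_mul_I]
    have : Complex.cos ((2 * π * β : ℝ) : ℂ) + Complex.sin ((2 * π * β : ℝ) : ℂ) * Complex.I - 1
        = ((Real.cos (2 * π * β) - 1 : ℝ) : ℂ) + ((Real.sin (2 * π * β) : ℝ) : ℂ) * Complex.I := by
      rw [Complex.ofReal_sub, Complex.ofReal_cos, Complex.ofReal_sin]
      push_cast
      ring
    rw [this, Complex.norm_add_mul_I]
    have hhalf : Real.sin (π * β) ^ 2 = 1 / 2 - Real.cos (2 * (π * β)) / 2 :=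
      Real.sin_sq_eq_half_sub (π * β)
    have hsum : (Real.cos (2 * π * β) - 1) ^ 2 + Real.sin (2 * π * β) ^ 2
        = (2 * |Real.sin (π * β)|) ^ 2 := by
      have h1 := Real.sin_sq_add_cos_sq (2 * π * β)
      have h2 : |Real.sin (π * β)| ^ 2 = Real.sin (π * β) ^ 2 := sq_abs _
      have h3 : 2 * (π * β) = 2 * π * β := by ring
      rw [h3] at hhalf
      nlinarith
    rw [hsum, Real.sqrt_sq (by positivity)]
  rw [habs]
  set n := round β with hn
  set δ := β - (n : ℝ) with hδ
  have hβ : β = δ + n := by ring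
  have hd2 : |δ| ≤ 1/2 := abs_sub_round β
  have hsin : |Real.sin (π * β)| = |Real.sin (π * δ)| := by
    have hrw : π * β = π * δ + (n : ℝ) * π := by rw [hβ]; ring
    rw [hrw, Real.sin_add_int_mul_pi, abs_mul]
    have : |((-1 : ℝ) ^ n)| = 1 := by
      rcases Int.even_or_odd n with he | ho
      · rw [he.neg_one_zpow]; simp
      · rw [ho.neg_one_zpow]; simp
    rw [this, one_mul]
  have habs2 : |Real.sin (π * δ)| = Real.sin (π * |δ|) := by
    rcases le_or_gt 0 δ with h | h
    · rw [abs_of_nonneg h, abs_of_nonneg]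
      apply Real.sin_nonneg_of_nonneg_of_le_pi (by positivity)
      rw [abs_of_nonneg h] at hd2
      nlinarith [Real.pi_pos]
    · rw [abs_of_neg h]
      rw [abs_of_neg h] at hd2
      have hnn : 0 ≤ Real.sin (π * -δ) := by
        apply Real.sin_nonneg_of_nonneg_of_le_pi (by nlinarith [Real.pi_pos])
        nlinarith [Real.pi_pos]
      have hneg : Real.sin (π * δ) = - Real.sin (π * -δ) := by
        rw [show π * -δ = -(π * δ) by ring, Real.sin_neg]; ring
      rw [hneg, abs_neg, abs_of_nonneg hnn]
  have hjordan : 2 * |δ| ≤ Real.sin (π * |δ|) := by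
    have hpi := Real.pi_pos
    have := Real.mul_le_sin (x := π * |δ|) (by positivity) (by nlinarith)
    have heq : 2 / π * (π * |δ|) = 2 * |δ| := by field_simp
    linarith [heq ▸ this]
  have hnd : nint β = |δ| := rfl
  rw [hnd, hsin, habs2]
  linarith

lemma e2πi_ne_one {β : ℝ} (h : nint β ≠ 0) : e2πi β ≠ 1 := by
  intro heq
  apply h
  unfold e2πi at heq
  rw [Complex.exp_eq_one_iff] at heq
  obtain ⟨n, hnn⟩ := heq
  have hπ : (2 * (π : ℂ) * Complex.I) ≠ 0 := by
    simp [Complex.I_ne_zero, Real.pi_ne_zero, Complex.ofReal_ne_zero]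
  have h2 : (2 * (π : ℂ) * Complex.I) * β = (2 * (π : ℂ) * Complex.I) * n := by
    rw [hnn]; ring
  have : (β : ℂ) = (n : ℂ) := mul_left_cancel₀ hπ h2
  have hβn : β = (n : ℝ) := by exact_mod_cast this
  unfold nint
  rw [hβn]
  simp

lemma e2πi_pow (β : ℝ) (m : ℕ) : e2πi β ^ m = e2πi (m * β) := by
  unfold e2πi
  rw [← Complex.exp_nat_mul]
  push_cast
  ring_nf

lemma norm_e2πi (β : ℝ) : ‖e2πi β‖ = 1 := by
  unfold e2πi
  rw [show 2 * (π : ℂ) * Complex.I * β = ((2 * π * β : ℝ) : ℂ) * Complex.I by push_cast; ring]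
  exact Complex.norm_exp_ofReal_mul_I _

lemma geom_segment_bound {β : ℝ} (h : nint β ≠ 0) (a b : ℕ) :
    ‖∑ m ∈ Finset.Icc a b, e2πi β ^ m‖ ≤ 1 / (2 * nint β) := by
  have hz : e2πi β ≠ 1 := e2πi_ne_one h
  have hpos : 0 < nint β := lt_of_le_of_ne (nint_nonneg β) (Ne.symm h)
  rcases le_or_gt a b with hab | hab
  · rw [← Finset.Ico_add_one_right_eq_Icc, geom_sum_Ico hz (by omega)]
    rw [norm_div]
    have hnum : ‖e2πi β ^ (b+1) - e2πi β ^ a‖ ≤ 2 := by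
      calc ‖e2πi β ^ (b+1) - e2πi β ^ a‖ ≤ ‖e2πi β ^ (b+1)‖ + ‖e2πi β ^ a‖ := norm_sub_le _ _
      _ = 2 := by rw [norm_pow, norm_pow, norm_e2πi]; norm_num
    have hden : 4 * nint β ≤ ‖e2πi β - 1‖ := e2πi_norm_sub_one β
    have hden0 : (0:ℝ) < ‖e2πi β - 1‖ := lt_of_lt_of_le (by linarith) hden
    rw [div_le_div_iff₀ hden0 (by positivity)]
    nlinarith
  · rw [Finset.Icc_eq_empty (by omega)]
    simp only [Finset.sum_empty, norm_zero]
    positivity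

lemma linear_sum_bound {β : ℝ} (h : nint β ≠ 0) (M : ℕ) :
    ‖∑ m ∈ Finset.Icc 1 M, (m : ℂ) * e2πi β ^ m‖ ≤ M * (1 / (2 * nint β)) := by
  have habel : ∑ m ∈ Finset.Icc 1 M, (m : ℂ) * e2πi β ^ m
      = ∑ t ∈ Finset.Icc 1 M, ∑ m ∈ Finset.Icc t M, e2πi β ^ m := by
    rw [← Finset.sum_comm' (s := Finset.Icc 1 M) (t := fun m => Finset.Icc 1 m)
      (f := fun m _ => e2πi β ^ m) (by intro m t; simp only [Finset.mem_Icc]; omega)]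
    apply Finset.sum_congr rfl
    intro m hm
    rw [Finset.sum_const, Nat.card_Icc]
    simp only [Nat.add_sub_cancel, nsmul_eq_mul]
  rw [habel]
  calc ‖∑ t ∈ Finset.Icc 1 M, ∑ m ∈ Finset.Icc t M, e2πi β ^ m‖
      ≤ ∑ t ∈ Finset.Icc 1 M, ‖∑ m ∈ Finset.Icc t M, e2πi β ^ m‖ := norm_sum_le _ _
    _ ≤ ∑ t ∈ Finset.Icc 1 M, 1 / (2 * nint β) := by
        apply Finset.sum_le_sum
        intro t _
        exact geom_segment_bound h t M
    _ = M * (1 / (2 * nint β)) := by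
        rw [Finset.sum_const, Nat.card_Icc]
        simp only [Nat.add_sub_cancel, nsmul_eq_mul]

lemma linear_sum_trivial (β : ℝ) (M : ℕ) :
    ‖∑ m ∈ Finset.Icc 1 M, (m : ℂ) * e2πi β ^ m‖ ≤ (M : ℝ) * M := by
  calc ‖∑ m ∈ Finset.Icc 1 M, (m : ℂ) * e2πi β ^ m‖
      ≤ ∑ m ∈ Finset.Icc 1 M, ‖(m : ℂ) * e2πi β ^ m‖ := norm_sum_le _ _
    _ ≤ ∑ m ∈ Finset.Icc 1 M, (M : ℝ) := by
        apply Finset.sum_le_sum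
        intro m hm
        rw [norm_mul, norm_pow, norm_e2πi, one_pow, mul_one, Complex.norm_natCast]
        exact_mod_cast (Finset.mem_Icc.1 hm).2
    _ = M * M := by
        rw [Finset.sum_const, Nat.card_Icc]
        simp [nsmul_eq_mul]


lemma swap_divisors (N : ℕ) (F : ℕ → ℕ → ℂ) :
    ∑ k ∈ Finset.Icc 1 N, ∑ p ∈ k.divisorsAntidiagonal, F p.1 p.2
      = ∑ b ∈ Finset.Icc 1 N, ∑ m ∈ Finset.Icc 1 (N / b), F b m := by
  rw [Finset.sum_sigma', Finset.sum_sigma']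
  apply Finset.sum_nbij' (i := fun x => (⟨x.2.1, x.2.2⟩ : Σ _ : ℕ, ℕ))
    (j := fun y => (⟨y.1 * y.2, (y.1, y.2)⟩ : Σ k : ℕ, ℕ × ℕ))
  · rintro ⟨k, b, m⟩ hx
    simp only [Finset.mem_sigma, Finset.mem_Icc, Nat.mem_divisorsAntidiagonal] at hx ⊢
    obtain ⟨⟨hk1, hk2⟩, hbm, hk0⟩ := hx
    have hb : 0 < b := by
      rcases Nat.eq_zero_or_pos b with h | h
      · subst h; simp at hbm; omega
      · exact h
    have hm : 0 < m := by
      rcases Nat.eq_zero_or_pos m with h | h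
      · subst h; simp at hbm; omega
      · exact h
    have hbN : b ≤ N := by
      calc b = b * 1 := (mul_one b).symm
      _ ≤ b * m := Nat.mul_le_mul_left b hm
      _ = k := hbm
      _ ≤ N := hk2
    refine ⟨⟨hb, hbN⟩, hm, ?_⟩
    rw [Nat.le_div_iff_mul_le hb, mul_comm m b, hbm]
    exact hk2
  · rintro ⟨b, m⟩ hy
    simp only [Finset.mem_sigma, Finset.mem_Icc, Nat.mem_divisorsAntidiagonal] at hy ⊢
    obtain ⟨⟨hb1, hb2⟩, hm1, hm2⟩ := hy
    rw [Nat.le_div_iff_mul_le (by omega)] at hm2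
    have hbm0 : 0 < b * m := by positivity
    refine ⟨⟨hbm0, by rw [mul_comm b m]; exact hm2⟩, ?_, ?_⟩
    · trivial
    · exact hbm0.ne'
  · rintro ⟨k, b, m⟩ hx
    simp only [Finset.mem_sigma, Nat.mem_divisorsAntidiagonal] at hx
    obtain ⟨_, hbm, _⟩ := hx
    simp [hbm]
  · rintro ⟨b, m⟩ _
    rfl
  · rintro ⟨k, b, m⟩ _
    rfl

open Finset ArithmeticFunction in
lemma key_identityC (q k : ℕ) (hq : 0 < q) (hk : 0 < k) :
    (Nat.totient (k * q) : ℂ) = (Nat.totient q : ℂ) *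
      ∑ b ∈ k.divisors, (if Nat.Coprime b q then (μ b : ℂ) * ((k / b : ℕ) : ℂ) else 0) := by
  have h := key_identity q k hq hk
  have h2 := congrArg (fun r : ℚ => (r : ℂ)) h
  simp only [Rat.cast_mul, Rat.cast_sum, Rat.cast_natCast, apply_ite (fun r : ℚ => (r : ℂ)),
    Rat.cast_zero, Rat.cast_intCast] at h2
  exact h2

open Finset ArithmeticFunction in
/-- **Lemma 8.2.** There is an absolute constant `C > 0` such that for every
`q ∈ ℤ⁺`, `α ∈ ℝ` and `X ≥ 1`:
`|∑_{1≤k≤X} φ(kq) e(kα)| ≤ C σ₁(q) X² ∑_{1≤j≤X} min(1/j², 1/(Xj⟨jα⟩))`. -/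
theorem totient_exponential_sum_bound :
    ∃ C : ℝ, 0 < C ∧ ∀ (q : ℕ+) (α X : ℝ), 1 ≤ X →
      ‖∑ k ∈ Finset.Icc 1 ⌊X⌋₊, (Nat.totient (k * (q : ℕ)) : ℂ) * e2πi ((k : ℝ) * α)‖ ≤
        C * (∑ d ∈ (q : ℕ).divisors, (d : ℝ)) * X ^ 2 *
          ∑ j ∈ Finset.Icc 1 ⌊X⌋₊,
            (if nint ((j : ℝ) * α) = 0 then 1 / (j : ℝ) ^ 2
             else min (1 / (j : ℝ) ^ 2) (1 / (X * (j : ℝ) * nint ((j : ℝ) * α)))) := by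
  refine ⟨1, one_pos, ?_⟩
  intro q α X hX
  set N := ⌊X⌋₊ with hN
  have hq : 0 < (q : ℕ) := q.pos
  have hX0 : (0 : ℝ) < X := lt_of_lt_of_le one_pos hX
  have hNX : (N : ℝ) ≤ X := Nat.floor_le hX0.le
  set c : ℕ → ℂ := fun b => if Nat.Coprime b (q : ℕ) then (μ b : ℂ) else 0 with hc
  -- Step 1: structural identity
  have hstep : ∑ k ∈ Finset.Icc 1 N, (Nat.totient (k * (q : ℕ)) : ℂ) * e2πi ((k : ℝ) * α)
      = (Nat.totient (q : ℕ) : ℂ) * ∑ b ∈ Finset.Icc 1 N,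
          c b * ∑ m ∈ Finset.Icc 1 (N / b), (m : ℂ) * e2πi ((b : ℝ) * α) ^ m := by
    have h1 : ∀ k ∈ Finset.Icc 1 N,
        (Nat.totient (k * (q : ℕ)) : ℂ) * e2πi ((k : ℝ) * α)
        = (Nat.totient (q : ℕ) : ℂ) * ∑ p ∈ k.divisorsAntidiagonal,
            c p.1 * ((p.2 : ℕ) : ℂ) * e2πi (((p.1 * p.2 : ℕ) : ℝ) * α) := by
      intro k hk
      rw [Finset.mem_Icc] at hk
      have hk1 : 0 < k := hk.1
      rw [key_identityC (q : ℕ) k hq hk1,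
        Nat.sum_divisorsAntidiagonal
          (f := fun b m => c b * ((m : ℕ) : ℂ) * e2πi (((b * m : ℕ) : ℝ) * α)),
        mul_assoc, Finset.sum_mul]
      congr 1
      apply Finset.sum_congr rfl
      intro b hb
      have hbd : b ∣ k := (Nat.mem_divisors.1 hb).1
      have hbk : b * (k / b) = k := Nat.mul_div_cancel' hbd
      rw [hbk, hc]
      dsimp only
      split_ifs with hco
      · ring
      · ring
    rw [Finset.sum_congr rfl h1, ← Finset.mul_sum,
      swap_divisors N (fun b m => c b * ((m : ℕ) : ℂ) * e2πi (((b * m : ℕ) : ℝ) * α))]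
    congr 1
    apply Finset.sum_congr rfl
    intro b _
    rw [Finset.mul_sum]
    apply Finset.sum_congr rfl
    intro m _
    rw [e2πi_pow]
    have : ((b * m : ℕ) : ℝ) * α = (m : ℝ) * ((b : ℝ) * α) := by push_cast; ring
    rw [this]
    ring
  rw [hstep]
  -- Step 2: per-term bounds
  have hbb : ∀ b ∈ Finset.Icc 1 N,
      ‖c b * ∑ m ∈ Finset.Icc 1 (N / b), (m : ℂ) * e2πi ((b : ℝ) * α) ^ m‖ ≤
        X ^ 2 * (if nint ((b : ℝ) * α) = 0 then 1 / (b : ℝ) ^ 2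
          else min (1 / (b : ℝ) ^ 2) (1 / (X * (b : ℝ) * nint ((b : ℝ) * α)))) := by
    intro b hb
    rw [Finset.mem_Icc] at hb
    have hb1 : (1 : ℝ) ≤ (b : ℝ) := by exact_mod_cast hb.1
    have hb0 : (0 : ℝ) < (b : ℝ) := by linarith
    set M := N / b with hM
    set S := ∑ m ∈ Finset.Icc 1 M, (m : ℂ) * e2πi ((b : ℝ) * α) ^ m with hS
    have hMb : (M : ℝ) * (b : ℝ) ≤ X := by
      have h' : M * b ≤ N := Nat.div_mul_le_self N b
      calc (M : ℝ) * (b : ℝ) = ((M * b : ℕ) : ℝ) := by push_cast; ring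
        _ ≤ (N : ℝ) := by exact_mod_cast h'
        _ ≤ X := hNX
    have hMle : (M : ℝ) ≤ X / (b : ℝ) := by
      rw [le_div_iff₀ hb0]; exact hMb
    have hM0 : (0 : ℝ) ≤ (M : ℝ) := Nat.cast_nonneg M
    have hcle : ‖c b‖ ≤ 1 := by
      rw [hc]
      dsimp only
      split_ifs
      · rw [show ((μ b : ℤ) : ℂ) = ((μ b : ℤ) : ℂ) from rfl, Complex.norm_intCast]
        exact_mod_cast abs_moebius_le_one
      · simp
    have hnormS : ‖c b * S‖ ≤ ‖S‖ := by
      rw [norm_mul]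
      calc ‖c b‖ * ‖S‖ ≤ 1 * ‖S‖ := by
            apply mul_le_mul_of_nonneg_right hcle (norm_nonneg S)
        _ = ‖S‖ := one_mul _
    have htriv : ‖S‖ ≤ (M : ℝ) * (M : ℝ) := linear_sum_trivial _ M
    have hsq : (M : ℝ) * (M : ℝ) ≤ X ^ 2 * (1 / (b : ℝ) ^ 2) := by
      calc (M : ℝ) * (M : ℝ) ≤ (X / (b : ℝ)) * (X / (b : ℝ)) :=
            mul_le_mul hMle hMle hM0 (by positivity)
        _ = X ^ 2 * (1 / (b : ℝ) ^ 2) := by field_simp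
    by_cases h0 : nint ((b : ℝ) * α) = 0
    · rw [if_pos h0]
      exact hnormS.trans (htriv.trans hsq)
    · rw [if_neg h0]
      have hnpos : 0 < nint ((b : ℝ) * α) := lt_of_le_of_ne (nint_nonneg _) (Ne.symm h0)
      have hlin := linear_sum_bound h0 M
      have hmin : X ^ 2 * min (1 / (b : ℝ) ^ 2) (1 / (X * (b : ℝ) * nint ((b : ℝ) * α)))
          = min (X ^ 2 * (1 / (b : ℝ) ^ 2))
              (X ^ 2 * (1 / (X * (b : ℝ) * nint ((b : ℝ) * α)))) := by
        rcases le_total (1 / (b : ℝ) ^ 2) (1 / (X * (b : ℝ) * nint ((b : ℝ) * α))) with h | h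
        · rw [min_eq_left h, min_eq_left (by nlinarith [sq_nonneg X])]
        · rw [min_eq_right h, min_eq_right (by nlinarith [sq_nonneg X])]
      rw [hmin]
      apply le_min
      · exact hnormS.trans (htriv.trans hsq)
      · have h2 : (M : ℝ) * (1 / (2 * nint ((b : ℝ) * α)))
            ≤ X ^ 2 * (1 / (X * (b : ℝ) * nint ((b : ℝ) * α))) := by
          rw [mul_one_div, mul_one_div]
          rw [div_le_div_iff₀ (by positivity) (by positivity)]
          have hkey : ((M : ℝ) * (b : ℝ)) * X * nint ((b : ℝ) * α)
              ≤ X * X * nint ((b : ℝ) * α) :=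
            mul_le_mul_of_nonneg_right
              (mul_le_mul_of_nonneg_right hMb hX0.le) hnpos.le
          nlinarith [hnpos, hX0]
        exact hnormS.trans (hlin.trans h2)
  -- Step 3: assemble
  have hterm_nonneg : ∀ j ∈ Finset.Icc 1 N,
      (0:ℝ) ≤ (if nint ((j : ℝ) * α) = 0 then 1 / (j : ℝ) ^ 2
        else min (1 / (j : ℝ) ^ 2) (1 / (X * (j : ℝ) * nint ((j : ℝ) * α)))) := by
    intro j hj
    rw [Finset.mem_Icc] at hj
    have : (0:ℝ) < j := by exact_mod_cast hj.1
    split_ifs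
    · positivity
    · apply le_min
      · positivity
      · apply div_nonneg zero_le_one
        exact mul_nonneg (mul_nonneg hX0.le (Nat.cast_nonneg j)) (nint_nonneg _)
  have hsum_nonneg : (0:ℝ) ≤ ∑ j ∈ Finset.Icc 1 N,
      (if nint ((j : ℝ) * α) = 0 then 1 / (j : ℝ) ^ 2
        else min (1 / (j : ℝ) ^ 2) (1 / (X * (j : ℝ) * nint ((j : ℝ) * α)))) :=
    Finset.sum_nonneg hterm_nonneg
  have hφσ : (Nat.totient (q : ℕ) : ℝ) ≤ ∑ d ∈ (q : ℕ).divisors, (d : ℝ) := by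
    calc (Nat.totient (q : ℕ) : ℝ) ≤ ((q : ℕ) : ℝ) := by
          exact_mod_cast Nat.totient_le (q : ℕ)
      _ ≤ ∑ d ∈ (q : ℕ).divisors, (d : ℝ) :=
          Finset.single_le_sum (fun d _ => Nat.cast_nonneg d)
            (Nat.mem_divisors_self (q : ℕ) hq.ne')
  calc ‖(Nat.totient (q : ℕ) : ℂ) * ∑ b ∈ Finset.Icc 1 N,
          c b * ∑ m ∈ Finset.Icc 1 (N / b), (m : ℂ) * e2πi ((b : ℝ) * α) ^ m‖
      = (Nat.totient (q : ℕ) : ℝ) * ‖∑ b ∈ Finset.Icc 1 N,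
          c b * ∑ m ∈ Finset.Icc 1 (N / b), (m : ℂ) * e2πi ((b : ℝ) * α) ^ m‖ := by
        rw [norm_mul, Complex.norm_natCast]
    _ ≤ (Nat.totient (q : ℕ) : ℝ) * ∑ b ∈ Finset.Icc 1 N,
          ‖c b * ∑ m ∈ Finset.Icc 1 (N / b), (m : ℂ) * e2πi ((b : ℝ) * α) ^ m‖ :=
        mul_le_mul_of_nonneg_left (norm_sum_le _ _) (Nat.cast_nonneg _)
    _ ≤ (Nat.totient (q : ℕ) : ℝ) * ∑ b ∈ Finset.Icc 1 N,
          (X ^ 2 * (if nint ((b : ℝ) * α) = 0 then 1 / (b : ℝ) ^ 2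
            else min (1 / (b : ℝ) ^ 2) (1 / (X * (b : ℝ) * nint ((b : ℝ) * α))))) :=
        mul_le_mul_of_nonneg_left (Finset.sum_le_sum hbb) (Nat.cast_nonneg _)
    _ = (Nat.totient (q : ℕ) : ℝ) * (X ^ 2 * ∑ j ∈ Finset.Icc 1 N,
          (if nint ((j : ℝ) * α) = 0 then 1 / (j : ℝ) ^ 2
            else min (1 / (j : ℝ) ^ 2) (1 / (X * (j : ℝ) * nint ((j : ℝ) * α))))) := by
        rw [← Finset.mul_sum]
    _ ≤ (∑ d ∈ (q : ℕ).divisors, (d : ℝ)) * (X ^ 2 * ∑ j ∈ Finset.Icc 1 N,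
          (if nint ((j : ℝ) * α) = 0 then 1 / (j : ℝ) ^ 2
            else min (1 / (j : ℝ) ^ 2) (1 / (X * (j : ℝ) * nint ((j : ℝ) * α))))) :=
        mul_le_mul_of_nonneg_right hφσ (by positivity)
    _ = 1 * (∑ d ∈ (q : ℕ).divisors, (d : ℝ)) * X ^ 2 * ∑ j ∈ Finset.Icc 1 N,
          (if nint ((j : ℝ) * α) = 0 then 1 / (j : ℝ) ^ 2
            else min (1 / (j : ℝ) ^ 2) (1 / (X * (j : ℝ) * nint ((j : ℝ) * α)))) := by
        ring

end
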